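/- Set a = 1 − ε and c = a/(1 + a²) for 0 < ε < 1. Then: (i) there exists C > 0 such that 1/|e^{2 i ε² t} − 2c| ≤ C·ε^{−2} for all t > 0 and all 0 < ε < 1; and (ii) there exist C' > 0 and ε₀ > 0 such that for all 0 < ε < ε₀ and all t with 0 < t ≤ (π/2)·ε^{−1/2}, one has |ε²/|e^{2 i ε² t} − 2c| − 2/√(1 + 16 t²)| ≤ C'·ε. -/

import Mathlib

lemma abs_eq16 (ε t : ℝ) :
    ‖Complex.exp (2*Complex.I*((ε^2*t : ℝ) : ℂ))
          - 2*(((1-ε)/(1+(1-ε)^2) : ℝ) : ℂ)‖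
    = Real.sqrt ((1 - 2*((1-ε)/(1+(1-ε)^2)))^2
        + 8*((1-ε)/(1+(1-ε)^2))*(Real.sin (ε^2*t))^2) := by
  set c : ℝ := (1-ε)/(1+(1-ε)^2) with hc
  set x : ℝ := ε^2*t with hx
  have h1 : (2*Complex.I*((x:ℝ):ℂ)) = ((2*x : ℝ):ℂ) * Complex.I := by push_cast; ring
  rw [h1, Complex.exp_mul_I, ← Complex.ofReal_cos, ← Complex.ofReal_sin]
  have h2 : (Real.cos (2*x) : ℂ) + (Real.sin (2*x) : ℂ) * Complex.I - 2*(c:ℂ)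
      = ((Real.cos (2*x) - 2*c : ℝ) : ℂ) + ((Real.sin (2*x) : ℝ) : ℂ) * Complex.I := by
    push_cast; ring
  rw [h2, Complex.norm_add_mul_I]
  congr 1
  have hcos : Real.cos (2*x) = 1 - 2*(Real.sin x)^2 := by
    have := Real.cos_two_mul x
    have := Real.sin_sq_add_cos_sq x
    nlinarith
  have h3 := Real.sin_sq_add_cos_sq (2*x)
  linear_combination h3 + (-4*c)*hcos


set_option maxHeartbeats 1000000 in
lemma core16 (ε t c x sx : ℝ) (hε : 0 < ε) (hεle : ε ≤ 1/4) (ht : 0 < t)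
    (hxd : x = ε^2*t)
    (hcp : c * (1+(1-ε)^2) = 1-ε)
    (hsxl : x - x^3/4 ≤ sx) (hsxu : sx ≤ x) (hsx0 : 0 ≤ sx)
    (ht2 : ε * t^2 ≤ 4) :
    |ε^2 / Real.sqrt ((1-2*c)^2 + 8*c*sx^2) - 2 / Real.sqrt (1 + 16*t^2)| ≤ 1000*ε := by
  have hp : (0:ℝ) < 1+(1-ε)^2 := by positivity
  have hple : 1+(1-ε)^2 ≤ 2 := by nlinarith only [hε, hεle]
  have hpge : 1 ≤ 1+(1-ε)^2 := by linarith only [sq_nonneg (1-ε)]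
  have hq1 : (1-2*c)*(1+(1-ε)^2) = ε^2 := by linear_combination (-2)*hcp
  have hqlb : ε^2/2 ≤ 1-2*c := by nlinarith only [hq1, hple, hp, sq_nonneg ε]
  have hqub : 1-2*c ≤ ε^2 := by nlinarith only [hq1, hpge, hp, sq_nonneg ε]
  have hclb : 2 ≤ 8*c := by nlinarith only [hcp, hp, hε, hεle]
  have hcub : 8*c ≤ 4 := by nlinarith only [hcp, hp, sq_nonneg ε]
  have hx0 : 0 < x := by rw [hxd]; positivity
  have hx2 : x^2 ≤ 4*ε^3 := by
    rw [hxd]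
    calc (ε^2*t)^2 = ε^3*(ε*t^2) := by ring
      _ ≤ ε^3*4 := mul_le_mul_of_nonneg_left ht2 (pow_pos hε 3).le
      _ = 4*ε^3 := by ring
  have hε3 : ε^3 ≤ (1:ℝ)/8 := by nlinarith only [hε, hεle, mul_pos hε hε, sq_nonneg ε]
  have hx1 : x ≤ 1 := by nlinarith only [hx2, hε3, hx0]
  have hpos : 0 ≤ x - x^3/4 := by nlinarith only [hx0, hx1, mul_pos hx0 hx0]
  have hsin_sq_lb : x^2 - x^4/2 ≤ sx^2 := by
    nlinarith only [mul_le_mul hsxl hsxl hpos hsx0, sq_nonneg (x^3)]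
  have hsin_sq_ub : sx^2 ≤ x^2 := by nlinarith only [hsxu, hsx0]
  set D : ℝ := (1-2*c)^2 + 8*c*sx^2 with hDdef
  have hxt : ε^4*t^2 = x^2 := by rw [hxd]; ring
  have hq2lb : ε^4/4 ≤ (1-2*c)^2 := by
    nlinarith only [mul_le_mul hqlb hqlb (by positivity : (0:ℝ) ≤ ε^2/2)
      (by linarith only [hqlb, sq_nonneg ε] : (0:ℝ) ≤ 1-2*c)]
  have h8csx : 0 ≤ 8*c*sx^2 := mul_nonneg (by linarith only [hclb]) (sq_nonneg sx)
  have hD0 : 0 < D := by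
    have h4 : (0:ℝ) < ε^4 := pow_pos hε 4
    linarith only [hDdef, hq2lb, h8csx, h4]
  have hxx1 : x^2 ≤ 1 := by nlinarith only [hx0, hx1]
  have hA4 : x^4 ≤ x^2 := by nlinarith only [hxx1, sq_nonneg x]
  have hB2 : x^2 ≤ 2*sx^2 := by linarith only [hsin_sq_lb, hA4]
  have hC2 : 2*sx^2 ≤ 8*c*sx^2 := by
    have := mul_nonneg (by linarith only [hclb] : (0:ℝ) ≤ 8*c - 2) (sq_nonneg sx)
    nlinarith only [this]
  have hDlb : ε^4*(1+16*t^2)/16 ≤ D := by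
    nlinarith only [hDdef, hq2lb, hB2, hC2, hxt]
  have hε48 : (0:ℝ) < 4 - 8*ε := by linarith only [hεle, hε]
  have hp2 : 4 - 8*ε ≤ (1+(1-ε)^2)^2 := by nlinarith only [sq_nonneg ε, sq_nonneg (ε*(2-ε))]
  have hε6 : 16*ε^6 ≤ 4*ε^5 := by
    have := mul_nonneg (pow_pos hε 5).le (by linarith only [hεle] : (0:ℝ) ≤ 1 - 4*ε)
    nlinarith only [this]
  have hq2ub : (1-2*c)^2 ≤ ε^4/4 + 2*ε^5 := by
    nlinarith only [hq1, hp2, hε48, hε6, sq_nonneg (1-2*c), hp, pow_pos hε 5,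
      mul_pos hp hp, sq_nonneg ((1-2*c)*(1+(1-ε)^2))]
  have h32 : 32*c*sx^2 ≤ 16*x^2 := by
    nlinarith only [mul_le_mul_of_nonneg_right (show 32*c ≤ 16 by linarith only [hcub])
      (sq_nonneg sx), hsin_sq_ub]
  have HUp : 4*D ≤ ε^4*(1+16*t^2) + 128*ε^5 := by
    nlinarith only [hDdef, hq2ub, h32, hxt, pow_pos hε 5]
  have hq4 : 4 - 8*c ≤ 4*ε^2 := by linarith only [hqub]
  have hA : (4-8*c)*x^2 ≤ 4*ε^2*x^2 := mul_le_mul_of_nonneg_right hq4 (sq_nonneg x)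
  have hB : x^2 - sx^2 ≤ x^4/2 := by linarith only [hsin_sq_lb]
  have hC : 8*c*(x^2-sx^2) ≤ 4*(x^4/2) :=
    mul_le_mul hcub hB (by linarith only [hsin_sq_ub]) (by norm_num)
  have hD1 : 4*ε^2*x^2 ≤ 16*ε^5 := by
    have := mul_le_mul_of_nonneg_left hx2 (sq_nonneg ε)
    nlinarith only [this]
  have hD2 : x^4 ≤ 4*ε^5 := by
    have h := mul_le_mul hx2 hx2 (sq_nonneg x) (by positivity : (0:ℝ) ≤ 4*ε^3)
    nlinarith only [h, hε6]
  have HDn : ε^4*(1+16*t^2) ≤ 4*D + 128*ε^5 := by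
    nlinarith only [hDdef, hA, hC, hD1, hD2, hq2lb, hxt, pow_pos hε 5]
  set u : ℝ := Real.sqrt (1+16*t^2) with hud
  have hu2 : u^2 = 1+16*t^2 := Real.sq_sqrt (by positivity)
  have hu1 : (1:ℝ) ≤ u := by
    have h := Real.sqrt_le_sqrt (show (1:ℝ) ≤ 1+16*t^2 by nlinarith only [sq_nonneg t])
    rwa [Real.sqrt_one] at h
  have hu0 : (0:ℝ) < u := lt_of_lt_of_le one_pos hu1
  set s : ℝ := Real.sqrt D with hsd
  have hs2 : s^2 = D := Real.sq_sqrt hD0.le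
  have hs0 : 0 < s := Real.sqrt_pos.mpr hD0
  have hu2' : ε^4*u^2 = ε^4*(1+16*t^2) := by rw [hu2]
  clear_value u s D
  have hsq : (ε^2*u)^2 ≤ (4*s)^2 := by nlinarith only [hu2', hs2, hDlb]
  have hsl : ε^2*u ≤ 4*s := by
    nlinarith only [hsq, hs0, hu0, mul_pos (mul_pos hε hε) hu0]
  have hnum : |ε^2*u - 2*s| * (ε^2*u + 2*s) ≤ 128*ε^5 := by
    have he : |ε^2*u - 2*s| * (ε^2*u + 2*s) = |ε^4*u^2 - 4*s^2| := by
      rw [← abs_of_nonneg (show (0:ℝ) ≤ ε^2*u + 2*s by positivity), ← abs_mul]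
      congr 1; ring
    rw [he, hs2, hu2, abs_le]
    constructor
    · linarith only [HUp]
    · linarith only [HDn]
  have hne : ε^2/s - 2/u = (ε^2*u - 2*s)/(s*u) := by
    field_simp
  rw [hne, abs_div, abs_of_pos (mul_pos hs0 hu0), div_le_iff₀ (mul_pos hs0 hu0)]
  have h8 : |ε^2*u - 2*s| * (ε^2*u) ≤ 128*ε^5 := by
    refine le_trans ?_ hnum
    nlinarith only [abs_nonneg (ε^2*u - 2*s), hs0]
  have h9 : ε^2*u^3 ≤ 4*s*u^2 := by
    have := mul_le_mul_of_nonneg_right hsl (sq_nonneg u)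
    nlinarith only [this]
  have h9' : ε^3*(ε^2*u^3) ≤ ε^3*(4*s*u^2) :=
    mul_le_mul_of_nonneg_left h9 (pow_pos hε 3).le
  have h10 : (1:ℝ) ≤ u^3 := by nlinarith only [hu1, hu0, sq_nonneg (u-1), mul_pos hu0 hu0]
  have hmul : 0 ≤ ε^5*(u^3 - 1) := mul_nonneg (pow_pos hε 5).le (by linarith only [h10])
  have hεu : 0 < ε^2*u := by positivity
  have key : |ε^2*u - 2*s| * (ε^2*u) ≤ (1000*ε*(s*u)) * (ε^2*u) := by
    nlinarith only [h8, h9', hmul,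
      mul_pos (mul_pos (pow_pos hε 3) hs0) (mul_pos hu0 hu0)]
  exact le_of_mul_le_mul_right key hεu


set_option maxHeartbeats 1000000 in
theorem stmt16 :
    (∃ C > 0, ∀ ε : ℝ, 0 < ε → ε < 1 → ∀ t : ℝ, 0 < t →
      1 / ‖Complex.exp (2*Complex.I*((ε^2*t : ℝ) : ℂ))
            - 2*(((1-ε)/(1+(1-ε)^2) : ℝ) : ℂ)‖
        ≤ C / ε^2) ∧
    (∃ C' > 0, ∃ ε₀ > 0, ∀ ε : ℝ, 0 < ε → ε < ε₀ → ∀ t : ℝ, 0 < t →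
      t ≤ Real.pi/2 * ε ^ (-(1/2) : ℝ) →
      |ε^2 / ‖Complex.exp (2*Complex.I*((ε^2*t : ℝ) : ℂ))
            - 2*(((1-ε)/(1+(1-ε)^2) : ℝ) : ℂ)‖
          - 2 / Real.sqrt (1 + 16*t^2)| ≤ C' * ε) := by
  constructor
  · -- Part (i)
    refine ⟨2, by norm_num, ?_⟩
    intro ε hε hε1 t ht
    rw [abs_eq16]
    set c : ℝ := (1-ε)/(1+(1-ε)^2) with hc
    have hp : (0:ℝ) < 1+(1-ε)^2 := by positivity
    have hcp : c * (1+(1-ε)^2) = 1-ε := by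
      rw [hc]; field_simp
    have hc0 : 0 ≤ c := by
      rw [hc]; apply div_nonneg (by linarith) hp.le
    clear_value c
    have hple : 1+(1-ε)^2 ≤ 2 := by nlinarith only [hε, hε1]
    have hq1 : (1-2*c)*(1+(1-ε)^2) = ε^2 := by linear_combination (-2)*hcp
    have hqlb : ε^2/2 ≤ 1-2*c := by nlinarith only [hq1, hple, hp, sq_nonneg ε]
    have hD : (ε^2/2)^2 ≤ (1-2*c)^2 + 8*c*(Real.sin (ε^2*t))^2 := by
      nlinarith only [hqlb, mul_nonneg hc0 (sq_nonneg (Real.sin (ε^2*t))), sq_nonneg ε]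
    have hsq : ε^2/2 ≤ Real.sqrt ((1-2*c)^2 + 8*c*(Real.sin (ε^2*t))^2) := by
      calc ε^2/2 = Real.sqrt ((ε^2/2)^2) := (Real.sqrt_sq (by positivity)).symm
        _ ≤ _ := Real.sqrt_le_sqrt hD
    calc 1 / Real.sqrt ((1-2*c)^2 + 8*c*(Real.sin (ε^2*t))^2)
        ≤ 1/(ε^2/2) := one_div_le_one_div_of_le (by positivity) hsq
      _ = 2/ε^2 := one_div_div _ _
  · -- Part (ii)
    refine ⟨1000, by norm_num, 1/4, by norm_num, ?_⟩
    intro ε hε hεq t ht htle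
    have hεle : ε ≤ 1/4 := hεq.le
    have hp : (0:ℝ) < 1+(1-ε)^2 := by positivity
    have hcp : ((1-ε)/(1+(1-ε)^2)) * (1+(1-ε)^2) = 1-ε :=
      div_mul_cancel₀ _ hp.ne'
    -- master bound ε t² ≤ 4
    have hr0 : (0:ℝ) ≤ ε ^ (-(1/2):ℝ) := (Real.rpow_pos_of_pos hε _).le
    have hA0 : (0:ℝ) ≤ Real.pi/2 * ε ^ (-(1/2):ℝ) := by positivity
    have hrp : ε ^ (-(1/2):ℝ) * ε ^ (-(1/2):ℝ) = ε⁻¹ := by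
      rw [← Real.rpow_add hε]
      norm_num [Real.rpow_neg_one]
    have hmm := mul_le_mul htle htle ht.le hA0
    have h2 : t^2 ≤ (Real.pi/2)^2 * (ε ^ (-(1/2):ℝ) * ε ^ (-(1/2):ℝ)) := by
      nlinarith only [hmm]
    rw [hrp] at h2
    have h3 := mul_le_mul_of_nonneg_left h2 hε.le
    have h4 : ε * ((Real.pi/2)^2 * ε⁻¹) = (Real.pi/2)^2 := by
      field_simp
    rw [h4] at h3
    have hpi4 : (Real.pi/2)^2 ≤ 4 := by
      nlinarith only [Real.pi_le_four, Real.pi_pos]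
    have ht2 : ε * t^2 ≤ 4 := by linarith only [h3, hpi4]
    -- bounds on x = ε² t
    have hx0 : 0 < ε^2*t := by positivity
    have hx1 : ε^2*t ≤ 1 := by
      nlinarith only [ht2, hε, hεle, hx0, ht,
        mul_le_mul_of_nonneg_left ht2 (pow_pos hε 3).le]
    have hsxl : ε^2*t - (ε^2*t)^3/4 ≤ Real.sin (ε^2*t) :=
      by have := Real.sin_gt_sub_cube hx0; nlinarith only [this, pow_pos hx0 3]
    have hsxu : Real.sin (ε^2*t) ≤ ε^2*t := (Real.sin_lt hx0).le
    have hsx0 : 0 ≤ Real.sin (ε^2*t) :=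
      Real.sin_nonneg_of_nonneg_of_le_pi hx0.le
        (hx1.trans (by linarith only [Real.pi_gt_three]))
    rw [abs_eq16]
    exact core16 ε t ((1-ε)/(1+(1-ε)^2)) (ε^2*t) (Real.sin (ε^2*t))
      hε hεle ht rfl hcp hsxl hsxu hsx0 ht2
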